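/- Let Λ be an even lattice, v primitive with ⟨v²⟩ = 2ℓ ≥ 6, and u ∈ Λ isotropic with ⟨v,u⟩ = 2. Set d_u = v − ℓu. If 2 ∤ ℓ then v + d_u = 2v − ℓu is primitive. If 2 ∣ ℓ, write v = au + bw in a saturated rank-2 sublattice containing v with ℤu + ℤw saturated; then b ∈ {±1, ±2}, and: if b = ±1 then (v+d_u)/2 is primitive; if b = ±2 and ℓ ≡ 2 mod 4 then (v+d_u)/4 ∈ Λ is primitive; if b = ±2 and ℓ ≡ 0 mod 4 then (v+d_u)/2 is primitive. -/

import Mathlib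

private lemma dvd_of_eq_smul' {Λ : Type*} [AddCommGroup Λ] [Module ℤ Λ]
    (B : Λ →ₗ[ℤ] Λ →ₗ[ℤ] ℤ) {z x : Λ} {m : ℤ} (h : z = m • x) (y : Λ) :
    m ∣ B z y :=
  ⟨B x y, by rw [h]; simp⟩

private lemma unit_of_dvd_two' {m : ℤ} (h2 : m ∣ 2) (hnot : ¬ (2:ℤ) ∣ m) : IsUnit m := by
  rw [Int.isUnit_iff_natAbs_eq]
  have h := Int.natAbs_dvd_natAbs.mpr h2
  rcases (Nat.dvd_prime Nat.prime_two).mp h with h1 | h1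
  · exact h1
  · exact absurd (Int.natAbs_dvd_natAbs.mp (by simp [h1])) hnot

/-- let `v` be primitive with `⟨v²⟩ = 2ℓ ≥ 6`, `u` primitive
isotropic with `⟨v,u⟩ = 2`, and `d_u = v − ℓu` (so `v + d_u = 2v − ℓu`).
If `2 ∤ ℓ` then `v + d_u` is primitive. If `2 ∣ ℓ` and `v = au + bw` in a
saturated sublattice `ℤu + ℤw`, then `b ∈ {±1, ±2}`; if `b = ±1` then
`(v + d_u)/2 = v − (ℓ/2)u` is primitive; if `b = ±2` and `ℓ ≡ 2 (mod 4)`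
then `(v + d_u)/4 ∈ Λ` and is primitive; if `b = ±2` and `ℓ ≡ 0 (mod 4)`
then `(v + d_u)/2 ∈ Λ` and is primitive. -/
theorem v_plus_du_divisibility
    {Λ : Type*} [AddCommGroup Λ] [Module ℤ Λ] [NoZeroSMulDivisors ℤ Λ]
    (B : Λ →ₗ[ℤ] Λ →ₗ[ℤ] ℤ) (hsymm : ∀ x y : Λ, B x y = B y x)
    (heven : ∀ x : Λ, 2 ∣ B x x)
    (ℓ : ℤ) (hℓ : 3 ≤ ℓ)
    (v u : Λ)
    (hvprim : ∀ (m : ℤ) (x : Λ), v = m • x → IsUnit m)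
    (huprim : ∀ (m : ℤ) (x : Λ), u = m • x → IsUnit m)
    (hv : B v v = 2 * ℓ) (hu : B u u = 0) (hvu : B v u = 2) :
    (¬ (2 ∣ ℓ) →
      ∀ (m : ℤ) (x : Λ), (2 : ℤ) • v - ℓ • u = m • x → IsUnit m) ∧
    (2 ∣ ℓ → ∀ (w : Λ) (a b : ℤ), v = a • u + b • w →
      (∀ (m : ℤ) (x : Λ), m ≠ 0 → (∃ c e : ℤ, m • x = c • u + e • w) →
        ∃ c e : ℤ, x = c • u + e • w) →
      ((b = 1 ∨ b = -1 ∨ b = 2 ∨ b = -2) ∧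
       ((b = 1 ∨ b = -1) →
         ∀ (m : ℤ) (x : Λ), v - (ℓ / 2) • u = m • x → IsUnit m) ∧
       ((b = 2 ∨ b = -2) → ℓ % 4 = 2 →
         ∃ z : Λ, (4 : ℤ) • z = (2 : ℤ) • v - ℓ • u ∧
           ∀ (m : ℤ) (x : Λ), z = m • x → IsUnit m) ∧
       ((b = 2 ∨ b = -2) → ℓ % 4 = 0 →
         ∃ z : Λ, (2 : ℤ) • z = (2 : ℤ) • v - ℓ • u ∧
           ∀ (m : ℤ) (x : Λ), z = m • x → IsUnit m))) := by
  have huv : B u v = 2 := by rw [hsymm u v]; exact hvu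
  constructor
  · -- ℓ odd case
    intro hodd m x hmx
    obtain ⟨k, hk⟩ : ∃ k, ℓ = 2 * k + 1 := by
      rcases Int.even_or_odd ℓ with ⟨r, hr⟩ | ⟨r, hr⟩
      · exact absurd ⟨r, by omega⟩ hodd
      · exact ⟨r, hr⟩
    -- m ∣ 4
    have e1 : B ((2:ℤ) • v - ℓ • u) u = 4 := by
      simp [map_sub, map_smul, smul_eq_mul, hvu, hu]
    have e2 : B ((2:ℤ) • v - ℓ • u) v = 2 * ℓ := by
      simp [map_sub, map_smul, smul_eq_mul, hv, huv]; ring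
    have hd4 : m ∣ 4 := by
      have := dvd_of_eq_smul' B hmx u; rwa [e1] at this
    have hd2l : m ∣ 2 * ℓ := by
      have := dvd_of_eq_smul' B hmx v; rwa [e2] at this
    have hd2 : m ∣ 2 := by
      obtain ⟨p, hp⟩ := hd4
      obtain ⟨q, hq⟩ := hd2l
      refine ⟨q - p * k, ?_⟩
      calc (2:ℤ) = 2 * ℓ - 4 * k := by omega
        _ = m * q - (m * p) * k := by rw [← hp, ← hq]
        _ = m * (q - p * k) := by ring
    have hm2 : ¬ (2:ℤ) ∣ m := by
      rintro ⟨k₀, rfl⟩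
      have hx2 : u = (2:ℤ) • (v - k₀ • x - k • u) := by
        have h0 := hmx
        rw [hk] at h0
        simp only [zsmul_add, zsmul_sub, zsmul_neg, add_zsmul, sub_zsmul, neg_zsmul, mul_zsmul, one_zsmul] at h0 ⊢
        rw [← h0]; abel
      have := huprim 2 _ hx2
      rw [Int.isUnit_iff] at this
      omega
    exact unit_of_dvd_two' hd2 hm2
  · -- ℓ even case
    intro h2ℓ w a b hveq hsat
    obtain ⟨L, hL⟩ := h2ℓ
    have huw : B u w = B w u := hsymm u w
    have hbc : b * B w u = 2 := by
      have h' : B v u = a * B u u + b * B w u := by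
        rw [hveq]; simp [map_add, map_smul, smul_eq_mul]
      rw [hvu, hu] at h'; linarith
    have hc0ne : B w u ≠ 0 := by
      intro h; rw [h, mul_zero] at hbc; exact absurd hbc (by norm_num)
    have hu0 : u ≠ 0 := by
      intro h; rw [h] at hvu; simp at hvu
    -- linear independence of u, w
    have hind : ∀ c e c' e' : ℤ, c • u + e • w = c' • u + e' • w → c = c' ∧ e = e' := by
      intro c e c' e' h
      have hB : c * B u u + e * B w u = c' * B u u + e' * B w u := by
        have := congrArg (fun z => B z u) h
        simpa [map_add, map_smul, smul_eq_mul] using this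
      rw [hu] at hB
      have he : e = e' := by
        have := mul_right_cancel₀ hc0ne (by linarith : e * B w u = e' * B w u)
        exact this
      subst he
      have hc : (c - c') • u = 0 := by
        have hcc := add_right_cancel h
        rw [sub_zsmul, hcc]
        abel
      have h0 := congrArg (fun z => B z v) hc
      simp [huv] at h0
      exact ⟨by omega, rfl⟩
    have hbd : b = 1 ∨ b = -1 ∨ b = 2 ∨ b = -2 := by
      have hb2 : b ∣ 2 := ⟨B w u, hbc.symm⟩
      have h := Int.natAbs_dvd_natAbs.mpr hb2
      have h2 : b.natAbs = 1 ∨ b.natAbs = 2 := (Nat.dvd_prime Nat.prime_two).mp h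
      rcases Int.natAbs_eq b with he | he <;> omega
    -- expansion of B v v
    have hWexp : 2 * ℓ = 2 * a * b * B w u + b * b * B w w := by
      conv_lhs => rw [← hv]
      conv_lhs => rw [hveq]
      simp [map_add, map_smul, smul_eq_mul, hu, huw]
      ring
    refine ⟨hbd, ?_, ?_, ?_⟩
    · -- b = ±1
      intro hb1 m x hmx
      have hL2 : ℓ / 2 = L := by omega
      rw [hL2] at hmx
      have e1 : B (v - L • u) u = 2 := by
        simp [map_sub, map_smul, smul_eq_mul, hvu, hu]
      have hd2 : m ∣ 2 := by
        have := dvd_of_eq_smul' B hmx u; rwa [e1] at this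
      have hm2 : ¬ (2:ℤ) ∣ m := by
        rintro ⟨k, rfl⟩
        have h0 := hmx
        rw [hveq] at h0
        have hx2 : (2:ℤ) • (k • x) = (a - L) • u + b • w := by
          simp only [zsmul_add, zsmul_sub, zsmul_neg, add_zsmul, sub_zsmul, neg_zsmul, mul_zsmul, one_zsmul] at h0 ⊢
          rw [← h0]; abel
        obtain ⟨c, e, hce⟩ := hsat 2 (k • x) (by norm_num) ⟨a - L, b, hx2⟩
        rw [hce] at hx2
        have h' : (2 * c) • u + (2 * e) • w = (a - L) • u + b • w := by
          rw [← hx2]; simp only [zsmul_add, zsmul_sub, zsmul_neg, add_zsmul, sub_zsmul, neg_zsmul, mul_zsmul, one_zsmul] <;> abel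
        have := (hind _ _ _ _ h').2
        omega
      exact unit_of_dvd_two' hd2 hm2
    · -- b = ±2, ℓ ≡ 2 mod 4
      intro hb2 hmod
      have ha : ¬ (2:ℤ) ∣ a := by
        rintro ⟨a', rfl⟩
        rcases hb2 with rfl | rfl
        · have := hvprim 2 (a' • u + w) (by rw [hveq]; simp only [zsmul_add, zsmul_sub, zsmul_neg, add_zsmul, sub_zsmul, neg_zsmul, mul_zsmul, one_zsmul] <;> abel)
          rw [Int.isUnit_iff] at this; omega
        · have := hvprim 2 (a' • u - w) (by rw [hveq]; simp only [zsmul_add, zsmul_sub, zsmul_neg, add_zsmul, sub_zsmul, neg_zsmul, mul_zsmul, one_zsmul] <;> abel)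
          rw [Int.isUnit_iff] at this; omega
      rcases hb2 with rfl | rfl
      · have hc1 : B w u = 1 := by omega
        rw [hc1] at hWexp
        have hWexp' : ℓ = 2 * a + 2 * B w w := by linarith
        obtain ⟨W', hW'⟩ : (2:ℤ) ∣ B w w := by omega
        refine ⟨(-W') • u + w, ?_, ?_⟩
        · rw [hveq, show ℓ = 2 * a + 4 * W' from by omega]
          simp only [zsmul_add, zsmul_sub, zsmul_neg, add_zsmul, sub_zsmul, neg_zsmul, mul_zsmul, one_zsmul] <;> abel
        · intro m x hmx
          have e1 : B ((-W') • u + w) u = 1 := by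
            simp [map_add, map_smul, smul_eq_mul, hu, hc1]
          have := dvd_of_eq_smul' B hmx u
          rw [e1] at this
          exact isUnit_of_dvd_one this
      · have hc1 : B w u = -1 := by omega
        rw [hc1] at hWexp
        have hWexp' : ℓ = 2 * a + 2 * B w w := by linarith
        obtain ⟨W', hW'⟩ : (2:ℤ) ∣ B w w := by omega
        refine ⟨(-W') • u - w, ?_, ?_⟩
        · rw [hveq, show ℓ = 2 * a + 4 * W' from by omega]
          simp only [zsmul_add, zsmul_sub, zsmul_neg, add_zsmul, sub_zsmul, neg_zsmul, mul_zsmul, one_zsmul] <;> abel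
        · intro m x hmx
          have e1 : B ((-W') • u - w) u = 1 := by
            simp [map_sub, map_add, map_smul, smul_eq_mul, hu, hc1]
          have := dvd_of_eq_smul' B hmx u
          rw [e1] at this
          exact isUnit_of_dvd_one this
    · -- b = ±2, ℓ ≡ 0 mod 4
      intro hb2 hmod
      have ha : ¬ (2:ℤ) ∣ a := by
        rintro ⟨a', rfl⟩
        rcases hb2 with rfl | rfl
        · have := hvprim 2 (a' • u + w) (by rw [hveq]; simp only [zsmul_add, zsmul_sub, zsmul_neg, add_zsmul, sub_zsmul, neg_zsmul, mul_zsmul, one_zsmul] <;> abel)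
          rw [Int.isUnit_iff] at this; omega
        · have := hvprim 2 (a' • u - w) (by rw [hveq]; simp only [zsmul_add, zsmul_sub, zsmul_neg, add_zsmul, sub_zsmul, neg_zsmul, mul_zsmul, one_zsmul] <;> abel)
          rw [Int.isUnit_iff] at this; omega
      refine ⟨v - L • u, by rw [hL]; simp only [zsmul_add, zsmul_sub, zsmul_neg, add_zsmul, sub_zsmul, neg_zsmul, mul_zsmul, one_zsmul] <;> abel, ?_⟩
      intro m x hmx
      have e1 : B (v - L • u) u = 2 := by
        simp [map_sub, map_smul, smul_eq_mul, hvu, hu]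
      have hd2 : m ∣ 2 := by
        have := dvd_of_eq_smul' B hmx u; rwa [e1] at this
      have hm2 : ¬ (2:ℤ) ∣ m := by
        rintro ⟨k, rfl⟩
        have h0 := hmx
        rw [hveq] at h0
        have hx2 : (2:ℤ) • (k • x) = (a - L) • u + b • w := by
          simp only [zsmul_add, zsmul_sub, zsmul_neg, add_zsmul, sub_zsmul, neg_zsmul, mul_zsmul, one_zsmul] at h0 ⊢
          rw [← h0]; abel
        obtain ⟨c, e, hce⟩ := hsat 2 (k • x) (by norm_num) ⟨a - L, b, hx2⟩
        rw [hce] at hx2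
        have h' : (2 * c) • u + (2 * e) • w = (a - L) • u + b • w := by
          rw [← hx2]; simp only [zsmul_add, zsmul_sub, zsmul_neg, add_zsmul, sub_zsmul, neg_zsmul, mul_zsmul, one_zsmul] <;> abel
        have h1 := (hind _ _ _ _ h').1
        -- a - L = 2*c, with a odd and L even (ℓ % 4 = 0, ℓ = 2L)
        omega
      exact unit_of_dvd_two' hd2 hm2
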